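/- Let π be a policy on M (taking actions only in A) such that the discounted probability of visiting a state-action pair with ζ(s,a) = 0 is at most ε_ζ, i.e., (1−γ) Σ_{h≥0} γ^h E_{(s,a)∼η_h^π}[1(ζ(s,a)=0)] ≤ ε_ζ. Then v_M^π ≤ v_{M'}^{Ξ(π)} + Vmax·ε_ζ/(1−γ). -/
import Mathlib


open scoped BigOperators

/-- A finite Markov decision process with transition probabilities `P`,
reward function `r`, discount factor `γ`, and initial distribution `ρ`. -/
structure MDP (S A : Type) [Fintype S] [Fintype A] where
  P : S → A → S → ℝ
  r : S → A → ℝ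
  γ : ℝ
  ρ : S → ℝ

variable {S A : Type} [Fintype S] [Fintype A]

/-- `P` has nonnegative rows summing to one, `ρ` is a distribution, `0 ≤ γ < 1`. -/
def IsValidMDP (M : MDP S A) : Prop :=
  (∀ s a s', 0 ≤ M.P s a s') ∧ (∀ s a, ∑ s' : S, M.P s a s' = 1) ∧
  (∀ s, 0 ≤ M.ρ s) ∧ (∑ s : S, M.ρ s = 1) ∧ 0 ≤ M.γ ∧ M.γ < 1

/-- A (stationary, stochastic) policy. -/
def IsPolicy (π : S → A → ℝ) : Prop :=
  (∀ s a, 0 ≤ π s a) ∧ ∀ s, ∑ a : A, π s a = 1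

/-- Marginal state distribution at step `h` under policy `π`. -/
noncomputable def stateDist (M : MDP S A) (π : S → A → ℝ) : ℕ → S → ℝ
  | 0 => M.ρ
  | h + 1 => fun s' => ∑ s : S, ∑ a : A, stateDist M π h s * π s a * M.P s a s'

/-- Expected discounted return of `π` from the initial distribution. -/
noncomputable def value (M : MDP S A) (π : S → A → ℝ) : ℝ :=
  ∑' h : ℕ, M.γ ^ h * ∑ s : S, ∑ a : A, stateDist M π h s * π s a * M.r s a

/-- State-action distribution at step `h` under `π`, starting from `init`. -/
noncomputable def saDist (M : MDP S A) (π : S → A → ℝ) (init : S × A → ℝ) :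
    ℕ → S × A → ℝ
  | 0 => init
  | h + 1 => fun p => ∑ q : S × A, saDist M π init h q * M.P q.1 q.2 p.1 * π p.1 p.2

open Classical in
/-- Action-value function `Q^π(s,a)`: discounted sum of expected rewards when
starting from the state-action pair `(s, a)` and following `π` afterwards. -/
noncomputable def Qf (M : MDP S A) (π : S → A → ℝ) (s : S) (a : A) : ℝ :=
  ∑' h : ℕ, M.γ ^ h * ∑ p : S × A,
    saDist M π (fun q => if q = (s, a) then 1 else 0) h p * M.r p.1 p.2

/-- State-value function `V^π(s)`. -/
noncomputable def Vf (M : MDP S A) (π : S → A → ℝ) (s : S) : ℝ :=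
  ∑ a : A, π s a * Qf M π s a

/-- The absorbing-augmented MDP `M'`: the extra state `none = s_abs` and extra
action `none = a_abs` give zero reward and lead deterministically to `s_abs`. -/
noncomputable def absorb (M : MDP S A) : MDP (Option S) (Option A) where
  P := fun s a s' =>
    match s, a with
    | some s0, some a0 => (match s' with | some t => M.P s0 a0 t | none => 0)
    | _, _ => (match s' with | none => 1 | some _ => 0)
  r := fun s a =>
    match s, a with
    | some s0, some a0 => M.r s0 a0
    | _, _ => 0
  γ := M.γ
  ρ := fun s => match s with | some s0 => M.ρ s0 | none => 0

/-- The ζ-constrained policy projection `Ξ`: it keeps the probability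
`ζ(s,a)·π(a|s)` on supported actions `a ∈ A` and sends all remaining mass
to the absorbing action `a_abs = none`. -/
noncomputable def proj (ζ : Option S → Option A → ℝ) (π : Option S → Option A → ℝ) :
    Option S → Option A → ℝ :=
  fun s a =>
    match a with
    | some _ => ζ s a * π s a
    | none => ∑ a' : Option A, π s a' * (1 - ζ s a')

/-- Lift a policy on `M` to the augmented MDP `M'` (never plays `a_abs` from
a genuine state, and plays `a_abs` from the absorbing state). -/
noncomputable def liftP (π : S → A → ℝ) : Option S → Option A → ℝ :=
  fun s a =>
    match s, a with
    | some s0, some a0 => π s0 a0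
    | some _, none => 0
    | none, a => (match a with | none => 1 | some _ => 0)

-- ==== aux lemmas ====
section Aux
open Finset

lemma stateDist_nonneg' {M : MDP S A} {π : S → A → ℝ} (hM : IsValidMDP M)
    (hπ : IsPolicy π) : ∀ h s, 0 ≤ stateDist M π h s := by
  intro h
  induction h with
  | zero => exact hM.2.2.1
  | succ h ih =>
    intro s'
    simp only [stateDist]
    exact Finset.sum_nonneg fun s _ => Finset.sum_nonneg fun a _ =>
      mul_nonneg (mul_nonneg (ih s) (hπ.1 s a)) (hM.1 s a s')

lemma stateDist_sum' {M : MDP S A} {π : S → A → ℝ} (hM : IsValidMDP M)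
    (hπ : IsPolicy π) : ∀ h, ∑ s, stateDist M π h s = 1 := by
  intro h
  induction h with
  | zero => exact hM.2.2.2.1
  | succ h ih =>
    simp only [stateDist]
    rw [Finset.sum_comm]
    calc ∑ s : S, ∑ s' : S, ∑ a : A, stateDist M π h s * π s a * M.P s a s'
        = ∑ s : S, ∑ a : A, ∑ s' : S, stateDist M π h s * π s a * M.P s a s' :=
          Finset.sum_congr rfl fun s _ => Finset.sum_comm
      _ = 1 := by
          simp_rw [← Finset.mul_sum, hM.2.1, mul_one]
          simp_rw [← Finset.mul_sum, hπ.2, mul_one]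
          exact ih

lemma saDist_nonneg' {M : MDP S A} {π : S → A → ℝ} (hM : IsValidMDP M)
    (hπ : IsPolicy π) {init : S × A → ℝ} (h0 : ∀ q, 0 ≤ init q) :
    ∀ h p, 0 ≤ saDist M π init h p := by
  intro h
  induction h with
  | zero => exact h0
  | succ h ih =>
    intro p
    simp only [saDist]
    exact Finset.sum_nonneg fun q _ =>
      mul_nonneg (mul_nonneg (ih q) (hM.1 _ _ _)) (hπ.1 _ _)

lemma saDist_sum' {M : MDP S A} {π : S → A → ℝ} (hM : IsValidMDP M)
    (hπ : IsPolicy π) (init : S × A → ℝ) :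
    ∀ h, ∑ p, saDist M π init h p = ∑ q, init q := by
  intro h
  induction h with
  | zero => rfl
  | succ h ih =>
    simp only [saDist]
    rw [Finset.sum_comm]
    have key : ∀ q : S × A, ∑ p : S × A, M.P q.1 q.2 p.1 * π p.1 p.2 = 1 := by
      intro q
      rw [Fintype.sum_prod_type]
      simp_rw [← Finset.mul_sum, hπ.2, mul_one]
      exact hM.2.1 _ _
    simp_rw [mul_assoc, ← Finset.mul_sum, key, mul_one]
    exact ih

end Aux

section Aux2
open Finset

open Classical in
lemma saDist_expand' (M : MDP S A) (π : S → A → ℝ) (init : S × A → ℝ) :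
    ∀ h p, saDist M π init h p
      = ∑ q : S × A, init q * saDist M π (fun q' => if q' = q then 1 else 0) h p := by
  intro h
  induction h with
  | zero =>
    intro p
    simp only [saDist]
    simp [mul_ite, mul_one, mul_zero, Finset.sum_ite_eq]
  | succ h ih =>
    intro p
    simp only [saDist]
    simp_rw [ih, Finset.sum_mul]
    rw [Finset.sum_comm]
    simp_rw [mul_assoc, ← Finset.mul_sum]

lemma saDist_shift' (M : MDP S A) (π : S → A → ℝ) (init : S × A → ℝ) :
    ∀ h, saDist M π init (h + 1)
      = saDist M π (fun p => ∑ q : S × A, init q * M.P q.1 q.2 p.1 * π p.1 p.2) h := by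
  intro h
  induction h with
  | zero => rfl
  | succ h ih =>
    funext p
    have e : saDist M π init (h + 1 + 1) p
        = ∑ q : S × A, saDist M π init (h + 1) q * M.P q.1 q.2 p.1 * π p.1 p.2 := rfl
    rw [e, ih]
    rfl

open Classical in
noncomputable def crQ (M : MDP S A) (π : S → A → ℝ) (q : S × A) (h : ℕ) : ℝ :=
  ∑ p : S × A, saDist M π (fun q' => if q' = q then 1 else 0) h p * M.r p.1 p.2

lemma Qf_eq_tsum (M : MDP S A) (π : S → A → ℝ) (s : S) (a : A) :
    Qf M π s a = ∑' h : ℕ, M.γ ^ h * crQ M π (s, a) h := rfl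

lemma crQ_zero (M : MDP S A) (π : S → A → ℝ) (q : S × A) :
    crQ M π q 0 = M.r q.1 q.2 := by
  simp [crQ, saDist, ite_mul, Finset.sum_ite_eq']

open Classical in
lemma crQ_succ (M : MDP S A) (π : S → A → ℝ) (q : S × A) (h : ℕ) :
    crQ M π q (h + 1) = ∑ q' : S × A, M.P q.1 q.2 q'.1 * π q'.1 q'.2 * crQ M π q' h := by
  simp only [crQ]
  rw [saDist_shift']
  have h1 : (fun p : S × A => ∑ q0 : S × A,
        (if q0 = q then (1:ℝ) else 0) * M.P q0.1 q0.2 p.1 * π p.1 p.2)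
      = fun p : S × A => M.P q.1 q.2 p.1 * π p.1 p.2 := by
    funext p
    simp [ite_mul, Finset.sum_ite_eq']
  rw [h1]
  have h2 := saDist_expand' M π (fun p : S × A => M.P q.1 q.2 p.1 * π p.1 p.2) h
  simp_rw [h2]
  simp_rw [Finset.sum_mul]
  rw [Finset.sum_comm]
  simp_rw [mul_assoc, ← Finset.mul_sum]

end Aux2

section Aux3
open Finset

open Classical in
lemma crQ_nonneg {M : MDP S A} {π : S → A → ℝ} (hM : IsValidMDP M) (hπ : IsPolicy π)
    (hr0 : ∀ s a, 0 ≤ M.r s a) (q : S × A) (h : ℕ) : 0 ≤ crQ M π q h :=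
  Finset.sum_nonneg fun p _ => mul_nonneg
    (saDist_nonneg' hM hπ (fun q' => by positivity) h p) (hr0 _ _)

open Classical in
lemma crQ_le {M : MDP S A} {π : S → A → ℝ} (hM : IsValidMDP M) (hπ : IsPolicy π)
    {Vmax : ℝ} (hr : ∀ s a, 0 ≤ M.r s a ∧ M.r s a ≤ Vmax) (q : S × A) (h : ℕ) :
    crQ M π q h ≤ Vmax := by
  have hδ : ∀ q' : S × A, (0:ℝ) ≤ if q' = q then 1 else 0 := fun q' => by positivity
  calc crQ M π q h
      ≤ ∑ p : S × A, saDist M π (fun q' => if q' = q then 1 else 0) h p * Vmax :=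
        Finset.sum_le_sum fun p _ =>
          mul_le_mul_of_nonneg_left (hr p.1 p.2).2 (saDist_nonneg' hM hπ hδ h p)
    _ = Vmax := by
        rw [← Finset.sum_mul, saDist_sum' hM hπ]
        simp [Finset.sum_ite_eq']

lemma summable_crQ {M : MDP S A} {π : S → A → ℝ} (hM : IsValidMDP M) (hπ : IsPolicy π)
    {Vmax : ℝ} (hr : ∀ s a, 0 ≤ M.r s a ∧ M.r s a ≤ Vmax) (q : S × A) :
    Summable (fun h : ℕ => M.γ ^ h * crQ M π q h) := by
  have hγ0 : 0 ≤ M.γ := hM.2.2.2.2.1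
  refine Summable.of_nonneg_of_le
    (fun h => mul_nonneg (pow_nonneg hγ0 h) (crQ_nonneg hM hπ (fun s a => (hr s a).1) q h))
    (fun h => ?_) ((summable_geometric_of_lt_one hγ0 hM.2.2.2.2.2).mul_right Vmax)
  calc M.γ ^ h * crQ M π q h ≤ M.γ ^ h * Vmax :=
        mul_le_mul_of_nonneg_left (crQ_le hM hπ hr q h) (pow_nonneg hγ0 h)
    _ = M.γ ^ h * Vmax := rfl

lemma Qf_nonneg' {M : MDP S A} {π : S → A → ℝ} (hM : IsValidMDP M) (hπ : IsPolicy π)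
    (hr0 : ∀ s a, 0 ≤ M.r s a) (s : S) (a : A) : 0 ≤ Qf M π s a :=
  tsum_nonneg fun h => mul_nonneg (pow_nonneg hM.2.2.2.2.1 h)
    (crQ_nonneg hM hπ hr0 (s, a) h)

lemma Qf_bellman {M : MDP S A} {π : S → A → ℝ} (hM : IsValidMDP M) (hπ : IsPolicy π)
    {Vmax : ℝ} (hr : ∀ s a, 0 ≤ M.r s a ∧ M.r s a ≤ Vmax) (s : S) (a : A) :
    Qf M π s a = M.r s a + M.γ * ∑ s' : S, M.P s a s' * Vf M π s' := by
  rw [Qf_eq_tsum, Summable.tsum_eq_zero_add (summable_crQ hM hπ hr (s, a))]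
  rw [pow_zero, one_mul, crQ_zero]
  congr 1
  have e1 : ∀ h : ℕ, M.γ ^ (h + 1) * crQ M π (s, a) (h + 1)
      = ∑ q' : S × A, M.P s a q'.1 * π q'.1 q'.2 * (M.γ * (M.γ ^ h * crQ M π q' h)) := by
    intro h
    rw [crQ_succ, Finset.mul_sum]
    exact Finset.sum_congr rfl fun q' _ => by ring
  simp_rw [e1]
  rw [Summable.tsum_finsetSum (fun q' _ => (((summable_crQ hM hπ hr q').mul_left M.γ).mul_left _))]
  have e2 : ∀ q' : S × A, ∑' h : ℕ, M.P s a q'.1 * π q'.1 q'.2 * (M.γ * (M.γ ^ h * crQ M π q' h))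
      = M.P s a q'.1 * π q'.1 q'.2 * (M.γ * Qf M π q'.1 q'.2) := by
    rintro ⟨s', a'⟩
    rw [tsum_mul_left, tsum_mul_left, ← Qf_eq_tsum]
  simp_rw [e2]
  rw [Fintype.sum_prod_type, Finset.mul_sum]
  refine Finset.sum_congr rfl fun s' _ => ?_
  rw [Vf, Finset.mul_sum, Finset.mul_sum]
  exact Finset.sum_congr rfl fun a' _ => by ring

lemma stateDist_saDist (M : MDP S A) (π : S → A → ℝ) :
    ∀ h (p : S × A),
      saDist M π (fun q => M.ρ q.1 * π q.1 q.2) h p = stateDist M π h p.1 * π p.1 p.2 := by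
  intro h
  induction h with
  | zero => intro p; rfl
  | succ h ih =>
    intro p
    simp only [saDist, stateDist]
    simp_rw [ih]
    rw [Fintype.sum_prod_type, Finset.sum_mul]
    refine Finset.sum_congr rfl fun s _ => ?_
    rw [Finset.sum_mul]

open Classical in
lemma value_eq_sum {M : MDP S A} {π : S → A → ℝ} (hM : IsValidMDP M) (hπ : IsPolicy π)
    {Vmax : ℝ} (hr : ∀ s a, 0 ≤ M.r s a ∧ M.r s a ≤ Vmax) :
    value M π = ∑ s : S, M.ρ s * Vf M π s := by
  have key : ∀ h : ℕ, (∑ s : S, ∑ a : A, stateDist M π h s * π s a * M.r s a)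
      = ∑ q : S × A, M.ρ q.1 * π q.1 q.2 * crQ M π q h := by
    intro h
    have e0 : (∑ s : S, ∑ a : A, stateDist M π h s * π s a * M.r s a)
        = ∑ p : S × A, stateDist M π h p.1 * π p.1 p.2 * M.r p.1 p.2 :=
      (Fintype.sum_prod_type (f := fun p : S × A => stateDist M π h p.1 * π p.1 p.2 * M.r p.1 p.2)).symm
    rw [e0]
    simp_rw [← stateDist_saDist M π h]
    have e1 := saDist_expand' M π (fun q : S × A => M.ρ q.1 * π q.1 q.2) h
    simp_rw [e1, Finset.sum_mul]
    rw [Finset.sum_comm]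
    simp_rw [mul_assoc, ← Finset.mul_sum]
    rfl
  have e3 : value M π = ∑' h : ℕ, ∑ q : S × A, M.ρ q.1 * π q.1 q.2 * (M.γ ^ h * crQ M π q h) := by
    rw [value]
    congr 1
    funext h
    rw [key h, Finset.mul_sum]
    exact Finset.sum_congr rfl fun q _ => by ring
  rw [e3, Summable.tsum_finsetSum (fun q _ => (summable_crQ hM hπ hr q).mul_left _)]
  have e4 : ∀ q : S × A, ∑' h : ℕ, M.ρ q.1 * π q.1 q.2 * (M.γ ^ h * crQ M π q h)
      = M.ρ q.1 * π q.1 q.2 * Qf M π q.1 q.2 := by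
    rintro ⟨s, a⟩
    rw [tsum_mul_left, ← Qf_eq_tsum]
  simp_rw [e4]
  rw [Fintype.sum_prod_type]
  refine Finset.sum_congr rfl fun s _ => ?_
  rw [Vf, Finset.mul_sum]
  exact Finset.sum_congr rfl fun a _ => by ring

end Aux3

section Aux4
open Finset

lemma absorb_valid (M : MDP S A) (hM : IsValidMDP M) : IsValidMDP (absorb M) := by
  obtain ⟨h1, h2, h3, h4, h5, h6⟩ := hM
  refine ⟨?_, ?_, ?_, ?_, h5, h6⟩
  · rintro (_|s) (_|a) (_|s') <;> simp [absorb] <;> try exact h1 _ _ _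
  · rintro (_|s) (_|a) <;> simp [absorb, Fintype.sum_option] <;> try exact h2 _ _
  · rintro (_|s) <;> simp [absorb] <;> try exact h3 _
  · simp [absorb, Fintype.sum_option]
    exact h4

lemma absorb_r_bounds (M : MDP S A) {Vmax : ℝ} (hV0 : 0 ≤ Vmax)
    (hr : ∀ s a, 0 ≤ M.r s a ∧ M.r s a ≤ Vmax) :
    ∀ s a, 0 ≤ (absorb M).r s a ∧ (absorb M).r s a ≤ Vmax := by
  rintro (_|s) (_|a) <;> constructor <;> simp [absorb] <;>
    first | exact hV0 | exact (hr _ _).1 | exact (hr _ _).2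

lemma isPolicy_proj (ζ : Option S → Option A → ℝ) (hζ01 : ∀ s a, ζ s a = 0 ∨ ζ s a = 1)
    (hζa : ∀ s, ζ s none = 0) (π : S → A → ℝ) (hπ : IsPolicy π) :
    IsPolicy (proj ζ (liftP π)) := by
  have hζ0 : ∀ s a, 0 ≤ ζ s a := fun s a => by rcases hζ01 s a with h | h <;> simp [h]
  have hζ1 : ∀ s a, ζ s a ≤ 1 := fun s a => by rcases hζ01 s a with h | h <;> simp [h]
  have hl0 : ∀ s a, 0 ≤ liftP π s a := by
    rintro (_|s) (_|a) <;> simp [liftP] <;> try exact hπ.1 _ _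
  have hl1 : ∀ s, ∑ a : Option A, liftP π s a = 1 := by
    rintro (_|s) <;> simp [liftP, Fintype.sum_option] <;> try exact hπ.2 _
  constructor
  · rintro s (_|a)
    · show 0 ≤ ∑ a' : Option A, liftP π s a' * (1 - ζ s a')
      exact Finset.sum_nonneg fun a' _ =>
        mul_nonneg (hl0 _ _) (by linarith [hζ1 s a'])
    · show 0 ≤ ζ s (some a) * liftP π s (some a)
      exact mul_nonneg (hζ0 _ _) (hl0 _ _)
  · intro s
    rw [Fintype.sum_option]
    show (∑ a' : Option A, liftP π s a' * (1 - ζ s a'))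
        + (∑ a : A, ζ s (some a) * liftP π s (some a)) = 1
    have e1 : ∑ a' : Option A, liftP π s a' * (1 - ζ s a')
        = 1 - ∑ a' : Option A, liftP π s a' * ζ s a' := by
      have : ∑ a' : Option A, liftP π s a' * (1 - ζ s a')
          = ∑ a' : Option A, (liftP π s a' - liftP π s a' * ζ s a') :=
        Finset.sum_congr rfl fun a' _ => by ring
      rw [this, Finset.sum_sub_distrib, hl1 s]
    rw [e1]
    have e2 : ∑ a' : Option A, liftP π s a' * ζ s a'
        = ∑ a : A, ζ s (some a) * liftP π s (some a) := by
      rw [Fintype.sum_option, hζa s]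
      simp [mul_comm]
    rw [e2]
    ring

end Aux4

section MainAux
open Finset

noncomputable def auxR (M : MDP S A) (π : S → A → ℝ) (h : ℕ) : ℝ :=
  ∑ s : S, ∑ a : A, stateDist M π h s * π s a * M.r s a

open Classical in
noncomputable def auxB (M : MDP S A) (π : S → A → ℝ)
    (ζ : Option S → Option A → ℝ) (h : ℕ) : ℝ :=
  ∑ s : S, ∑ a : A, stateDist M π h s * π s a *
    (if ζ (some s) (some a) = 0 then (1 : ℝ) else 0)

noncomputable def auxW (M : MDP S A) (π : S → A → ℝ)
    (ζ : Option S → Option A → ℝ) (h : ℕ) : ℝ :=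
  M.γ ^ h * ∑ s : S, stateDist M π h s * Vf (absorb M) (proj ζ (liftP π)) (some s)

end MainAux
open Classical in
/-- If the discounted probability, under a policy `π` on `M`,
of visiting a state-action pair with `ζ(s,a) = 0` is at most `ε_ζ`, then
`v_M^π ≤ v_{M'}^{Ξ(π)} + Vmax·ε_ζ/(1−γ)`. -/
theorem value_le_value_proj_add (M : MDP S A) (hM : IsValidMDP M)
    (Vmax : ℝ) (hr : ∀ s a, 0 ≤ M.r s a ∧ M.r s a ≤ Vmax)
    (ζ : Option S → Option A → ℝ)
    (hζ01 : ∀ s a, ζ s a = 0 ∨ ζ s a = 1)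
    (hζa : ∀ s, ζ s none = 0) (hζs : ∀ a, ζ none a = 0)
    (π : S → A → ℝ) (hπ : IsPolicy π)
    (hQb : ∀ s a, Qf (absorb M) (proj ζ (liftP π)) s a ≤ Vmax)
    (εζ : ℝ)
    (hεζ : (1 - M.γ) * ∑' h : ℕ, M.γ ^ h *
        ∑ s : S, ∑ a : A, stateDist M π h s * π s a *
          (if ζ (some s) (some a) = 0 then (1 : ℝ) else 0) ≤ εζ) :
    value M π ≤ value (absorb M) (proj ζ (liftP π)) + Vmax * εζ / (1 - M.γ) := by
  have hγ0 : 0 ≤ M.γ := hM.2.2.2.2.1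
  have hγ1 : M.γ < 1 := hM.2.2.2.2.2
  have hγd : 0 < 1 - M.γ := by linarith
  -- nonemptiness and 0 ≤ Vmax
  have hS : Nonempty S := by
    by_contra hc
    rw [not_nonempty_iff] at hc
    have h4 := hM.2.2.2.1
    simp [Finset.univ_eq_empty] at h4
  have hA : Nonempty A := by
    by_contra hc
    rw [not_nonempty_iff] at hc
    have h4 := hπ.2 (Classical.arbitrary S)
    simp [Finset.univ_eq_empty] at h4
  obtain ⟨s0⟩ := hS
  obtain ⟨a0⟩ := hA
  have hV0 : 0 ≤ Vmax := le_trans (hr s0 a0).1 (hr s0 a0).2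
  -- basic facts about the augmented MDP and projected policy
  have hM' : IsValidMDP (absorb M) := absorb_valid M hM
  have hπ'v : IsPolicy (proj ζ (liftP π)) := isPolicy_proj ζ hζ01 hζa π hπ
  have hr' : ∀ s a, 0 ≤ (absorb M).r s a ∧ (absorb M).r s a ≤ Vmax :=
    absorb_r_bounds M hV0 hr
  have hQnn : ∀ s a, 0 ≤ Qf (absorb M) (proj ζ (liftP π)) s a := fun s a =>
    Qf_nonneg' hM' hπ'v (fun s a => (hr' s a).1) s a
  have hVnn : ∀ s, 0 ≤ Vf (absorb M) (proj ζ (liftP π)) s := fun s =>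
    Finset.sum_nonneg fun a _ => mul_nonneg (hπ'v.1 s a) (hQnn s a)
  have hdnn : ∀ h s, 0 ≤ stateDist M π h s := stateDist_nonneg' hM hπ
  have hdsum : ∀ h, ∑ s, stateDist M π h s = 1 := stateDist_sum' hM hπ
  -- Bellman equation at genuine state-action pairs
  have bell : ∀ (s : S) (a : A), Qf (absorb M) (proj ζ (liftP π)) (some s) (some a)
      = M.r s a + M.γ * ∑ s' : S,
        M.P s a s' * Vf (absorb M) (proj ζ (liftP π)) (some s') := by
    intro s a
    rw [Qf_bellman hM' hπ'v hr' (some s) (some a)]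
    have hr1 : (absorb M).r (some s) (some a) = M.r s a := rfl
    have hγ' : (absorb M).γ = M.γ := rfl
    rw [hr1, hγ']
    congr 1
    rw [Fintype.sum_option]
    have h0 : (absorb M).P (some s) (some a) none = 0 := rfl
    rw [h0, zero_mul, zero_add]
    rfl
  -- per-state inequality from Q ≤ Vmax
  have key3 : ∀ s : S,
      ∑ a : A, π s a * Qf (absorb M) (proj ζ (liftP π)) (some s) (some a)
      ≤ Vf (absorb M) (proj ζ (liftP π)) (some s)
        + Vmax * ∑ a : A, π s a * (if ζ (some s) (some a) = 0 then (1:ℝ) else 0) := by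
    intro s
    have hVs : Vf (absorb M) (proj ζ (liftP π)) (some s)
        = proj ζ (liftP π) (some s) none * Qf (absorb M) (proj ζ (liftP π)) (some s) none
          + ∑ a : A, ζ (some s) (some a) * π s a *
              Qf (absorb M) (proj ζ (liftP π)) (some s) (some a) := by
      rw [Vf, Fintype.sum_option]
      congr 1
    have h1 : ∀ a : A, π s a * Qf (absorb M) (proj ζ (liftP π)) (some s) (some a)
        ≤ ζ (some s) (some a) * π s a * Qf (absorb M) (proj ζ (liftP π)) (some s) (some a)
          + Vmax * (π s a * (if ζ (some s) (some a) = 0 then (1:ℝ) else 0)) := by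
      intro a
      rcases hζ01 (some s) (some a) with h | h
      · rw [h]
        have h2 : π s a * Qf (absorb M) (proj ζ (liftP π)) (some s) (some a)
            ≤ Vmax * π s a := by
          rw [mul_comm Vmax]
          exact mul_le_mul_of_nonneg_left (hQb _ _) (hπ.1 s a)
        simpa using h2
      · rw [h]
        simp
    calc ∑ a : A, π s a * Qf (absorb M) (proj ζ (liftP π)) (some s) (some a)
        ≤ ∑ a : A, (ζ (some s) (some a) * π s a *
              Qf (absorb M) (proj ζ (liftP π)) (some s) (some a)
            + Vmax * (π s a * (if ζ (some s) (some a) = 0 then (1:ℝ) else 0))) :=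
          Finset.sum_le_sum fun a _ => h1 a
      _ = (∑ a : A, ζ (some s) (some a) * π s a *
              Qf (absorb M) (proj ζ (liftP π)) (some s) (some a))
          + Vmax * ∑ a : A, π s a * (if ζ (some s) (some a) = 0 then (1:ℝ) else 0) := by
          rw [Finset.sum_add_distrib, Finset.mul_sum]
      _ ≤ _ := by
          have hq0 := mul_nonneg (hπ'v.1 (some s) none) (hQnn (some s) none)
          rw [hVs]
          linarith
  -- step identity
  have step : ∀ h : ℕ,
      ∑ s : S, stateDist M π h s *
        ∑ a : A, π s a * Qf (absorb M) (proj ζ (liftP π)) (some s) (some a)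
      = auxR M π h + M.γ * ∑ s' : S, stateDist M π (h+1) s' *
          Vf (absorb M) (proj ζ (liftP π)) (some s') := by
    intro h
    calc ∑ s : S, stateDist M π h s *
          ∑ a : A, π s a * Qf (absorb M) (proj ζ (liftP π)) (some s) (some a)
        = ∑ s : S, ∑ a : A, (stateDist M π h s * π s a * M.r s a
            + ∑ s' : S, M.γ * (stateDist M π h s * π s a * M.P s a s' *
                Vf (absorb M) (proj ζ (liftP π)) (some s'))) := by
          refine Finset.sum_congr rfl fun s _ => ?_
          rw [Finset.mul_sum]
          refine Finset.sum_congr rfl fun a _ => ?_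
          rw [bell s a]
          rw [show stateDist M π h s * (π s a * (M.r s a + M.γ * ∑ s' : S, M.P s a s' *
                Vf (absorb M) (proj ζ (liftP π)) (some s')))
              = stateDist M π h s * π s a * M.r s a
                + (stateDist M π h s * π s a * M.γ) * ∑ s' : S, M.P s a s' *
                    Vf (absorb M) (proj ζ (liftP π)) (some s') from by ring]
          congr 1
          rw [Finset.mul_sum]
          exact Finset.sum_congr rfl fun s' _ => by ring
      _ = auxR M π h + ∑ s : S, ∑ a : A, ∑ s' : S,
            M.γ * (stateDist M π h s * π s a * M.P s a s' *
              Vf (absorb M) (proj ζ (liftP π)) (some s')) := by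
          simp_rw [Finset.sum_add_distrib]
          rfl
      _ = auxR M π h + M.γ * ∑ s' : S, stateDist M π (h+1) s' *
            Vf (absorb M) (proj ζ (liftP π)) (some s') := by
          congr 1
          calc ∑ s : S, ∑ a : A, ∑ s' : S,
                M.γ * (stateDist M π h s * π s a * M.P s a s' *
                  Vf (absorb M) (proj ζ (liftP π)) (some s'))
              = ∑ s : S, ∑ s' : S, ∑ a : A,
                M.γ * (stateDist M π h s * π s a * M.P s a s' *
                  Vf (absorb M) (proj ζ (liftP π)) (some s')) :=
                Finset.sum_congr rfl fun s _ => Finset.sum_comm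
            _ = ∑ s' : S, ∑ s : S, ∑ a : A,
                M.γ * (stateDist M π h s * π s a * M.P s a s' *
                  Vf (absorb M) (proj ζ (liftP π)) (some s')) := Finset.sum_comm
            _ = M.γ * ∑ s' : S, stateDist M π (h+1) s' *
                  Vf (absorb M) (proj ζ (liftP π)) (some s') := by
                rw [Finset.mul_sum]
                refine Finset.sum_congr rfl fun s' _ => ?_
                have hd1 : stateDist M π (h+1) s'
                    = ∑ s : S, ∑ a : A, stateDist M π h s * π s a * M.P s a s' := rfl
                rw [hd1, Finset.sum_mul, Finset.mul_sum]
                refine Finset.sum_congr rfl fun s _ => ?_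
                rw [Finset.sum_mul, Finset.mul_sum]
  -- per-step inequality
  have perstep : ∀ h : ℕ, M.γ ^ h * auxR M π h + auxW M π ζ (h+1)
      ≤ auxW M π ζ h + Vmax * (M.γ ^ h * auxB M π ζ h) := by
    intro h
    have k : ∑ s : S, stateDist M π h s *
          ∑ a : A, π s a * Qf (absorb M) (proj ζ (liftP π)) (some s) (some a)
        ≤ (∑ s : S, stateDist M π h s * Vf (absorb M) (proj ζ (liftP π)) (some s))
          + Vmax * auxB M π ζ h := by
      calc ∑ s : S, stateDist M π h s *
            ∑ a : A, π s a * Qf (absorb M) (proj ζ (liftP π)) (some s) (some a)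
          ≤ ∑ s : S, stateDist M π h s *
              (Vf (absorb M) (proj ζ (liftP π)) (some s)
                + Vmax * ∑ a : A, π s a * (if ζ (some s) (some a) = 0 then (1:ℝ) else 0)) :=
            Finset.sum_le_sum fun s _ =>
              mul_le_mul_of_nonneg_left (key3 s) (hdnn h s)
        _ = (∑ s : S, stateDist M π h s * Vf (absorb M) (proj ζ (liftP π)) (some s))
            + Vmax * auxB M π ζ h := by
            simp_rw [mul_add]
            rw [Finset.sum_add_distrib]
            congr 1
            simp only [auxB]
            simp_rw [Finset.mul_sum]
            exact Finset.sum_congr rfl fun s _ =>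
              Finset.sum_congr rfl fun a _ => by ring
    have k2 : auxR M π h + M.γ * ∑ s' : S, stateDist M π (h+1) s' *
          Vf (absorb M) (proj ζ (liftP π)) (some s')
        ≤ (∑ s : S, stateDist M π h s * Vf (absorb M) (proj ζ (liftP π)) (some s))
          + Vmax * auxB M π ζ h := by
      rw [← step h]; exact k
    have k3 := mul_le_mul_of_nonneg_left k2 (pow_nonneg hγ0 h)
    calc M.γ ^ h * auxR M π h + auxW M π ζ (h+1)
        = M.γ ^ h * (auxR M π h + M.γ * ∑ s' : S, stateDist M π (h+1) s' *
            Vf (absorb M) (proj ζ (liftP π)) (some s')) := by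
          simp only [auxW]; ring
      _ ≤ M.γ ^ h * ((∑ s : S, stateDist M π h s *
            Vf (absorb M) (proj ζ (liftP π)) (some s)) + Vmax * auxB M π ζ h) := k3
      _ = auxW M π ζ h + Vmax * (M.γ ^ h * auxB M π ζ h) := by
          simp only [auxW]; ring
  -- bounds and summability
  have hRnn : ∀ h, 0 ≤ auxR M π h := fun h =>
    Finset.sum_nonneg fun s _ => Finset.sum_nonneg fun a _ =>
      mul_nonneg (mul_nonneg (hdnn h s) (hπ.1 s a)) (hr s a).1
  have hRle : ∀ h, auxR M π h ≤ Vmax := by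
    intro h
    calc auxR M π h ≤ ∑ s : S, ∑ a : A, stateDist M π h s * π s a * Vmax :=
        Finset.sum_le_sum fun s _ => Finset.sum_le_sum fun a _ =>
          mul_le_mul_of_nonneg_left (hr s a).2 (mul_nonneg (hdnn h s) (hπ.1 s a))
      _ = Vmax := by
          simp_rw [← Finset.sum_mul]
          simp_rw [← Finset.mul_sum, hπ.2, mul_one]
          rw [hdsum h, one_mul]
  have hBnn : ∀ h, 0 ≤ auxB M π ζ h := fun h =>
    Finset.sum_nonneg fun s _ => Finset.sum_nonneg fun a _ =>
      mul_nonneg (mul_nonneg (hdnn h s) (hπ.1 s a)) (by positivity)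
  have hBle : ∀ h, auxB M π ζ h ≤ 1 := by
    intro h
    calc auxB M π ζ h ≤ ∑ s : S, ∑ a : A, stateDist M π h s * π s a * 1 :=
        Finset.sum_le_sum fun s _ => Finset.sum_le_sum fun a _ =>
          mul_le_mul_of_nonneg_left (by split <;> norm_num)
            (mul_nonneg (hdnn h s) (hπ.1 s a))
      _ = 1 := by
          simp_rw [mul_one]
          simp_rw [← Finset.mul_sum, hπ.2, mul_one]
          exact hdsum h
  have sumf : Summable (fun h : ℕ => M.γ ^ h * auxR M π h) := by
    refine Summable.of_nonneg_of_le
      (fun h => mul_nonneg (pow_nonneg hγ0 h) (hRnn h)) (fun h => ?_)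
      ((summable_geometric_of_lt_one hγ0 hγ1).mul_right Vmax)
    exact mul_le_mul_of_nonneg_left (hRle h) (pow_nonneg hγ0 h)
  have sumg : Summable (fun h : ℕ => M.γ ^ h * auxB M π ζ h) := by
    refine Summable.of_nonneg_of_le
      (fun h => mul_nonneg (pow_nonneg hγ0 h) (hBnn h)) (fun h => ?_)
      (summable_geometric_of_lt_one hγ0 hγ1)
    calc M.γ ^ h * auxB M π ζ h ≤ M.γ ^ h * 1 :=
        mul_le_mul_of_nonneg_left (hBle h) (pow_nonneg hγ0 h)
      _ = M.γ ^ h := mul_one _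
  have hWnn : ∀ N, 0 ≤ auxW M π ζ N := fun N =>
    mul_nonneg (pow_nonneg hγ0 N)
      (Finset.sum_nonneg fun s _ => mul_nonneg (hdnn N s) (hVnn _))
  -- partial sums
  have hpartial : ∀ N : ℕ,
      (∑ h ∈ Finset.range N, M.γ ^ h * auxR M π h) + auxW M π ζ N
      ≤ auxW M π ζ 0 + Vmax * ∑ h ∈ Finset.range N, M.γ ^ h * auxB M π ζ h := by
    intro N
    induction N with
    | zero => simp
    | succ N ih =>
      rw [Finset.sum_range_succ, Finset.sum_range_succ, mul_add]
      have h1 := perstep N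
      linarith
  -- conclude
  have tsumB_le : ∑' h : ℕ, M.γ ^ h * auxB M π ζ h ≤ εζ / (1 - M.γ) := by
    rw [le_div_iff₀ hγd]
    have : (1 - M.γ) * ∑' h : ℕ, M.γ ^ h * auxB M π ζ h ≤ εζ := hεζ
    linarith
  have hval : value M π ≤ auxW M π ζ 0 + Vmax * ∑' h : ℕ, M.γ ^ h * auxB M π ζ h := by
    have : value M π = ∑' h : ℕ, M.γ ^ h * auxR M π h := rfl
    rw [this]
    refine Summable.tsum_le_of_sum_range_le sumf fun N => ?_
    have h1 := hpartial N
    have h2 : ∑ h ∈ Finset.range N, M.γ ^ h * auxB M π ζ h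
        ≤ ∑' h : ℕ, M.γ ^ h * auxB M π ζ h :=
      Summable.sum_le_tsum (Finset.range N)
        (fun i _ => mul_nonneg (pow_nonneg hγ0 i) (hBnn i)) sumg
    have h3 := mul_le_mul_of_nonneg_left h2 hV0
    have h4 := hWnn N
    linarith
  have hW0 : auxW M π ζ 0 = value (absorb M) (proj ζ (liftP π)) := by
    rw [value_eq_sum hM' hπ'v hr', Fintype.sum_option]
    have e0 : (absorb M).ρ none = 0 := rfl
    rw [e0, zero_mul, zero_add, auxW, pow_zero, one_mul]
    rfl
  have final : Vmax * ∑' h : ℕ, M.γ ^ h * auxB M π ζ h ≤ Vmax * εζ / (1 - M.γ) := by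
    rw [mul_div_assoc]
    exact mul_le_mul_of_nonneg_left tsumB_le hV0
  rw [← hW0]
  linarith
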